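/- For every odd integer ℓ ≥ 5, if G is a graph that is a blow-up of a cycle of length ℓ (i.e., V(G) is partitioned into nonempty cliques W₁,…,W_ℓ such that edges exist only between consecutive parts Wᵢ, Wᵢ₊₁ (indices mod ℓ), and each bipartite graph G[Wᵢ₋₁, Wᵢ] obeys orderings of the cliques), then the chromatic number of G satisfies χ(G) ≤ ⌈(ℓ/(ℓ−1))·ω(G)⌉, where ω(G) is the clique number. -/

import Mathlib

open SimpleGraph Finset

/-- `G` is a blow-up of a cycle of length `ℓ`: the vertex set is partitioned into `ℓ`
nonempty ordered cliques `W i` (`i : ZMod ℓ`), edges occur only between consecutive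
cliques (indices mod `ℓ`), and the bipartite graph between consecutive cliques obeys the
orderings (recorded by `pos`): each vertex is adjacent to an initial segment of the
neighbouring clique. -/
def IsCycleBlowup {V : Type} (G : SimpleGraph V) (ℓ : ℕ) : Prop :=
  ∃ (W : ZMod ℓ → Finset V) (pos : V → ℕ),
    (∀ v : V, ∃! i, v ∈ W i) ∧
    (∀ i, (W i).Nonempty) ∧
    (∀ i, G.IsClique (W i)) ∧
    (∀ i j, ∀ u ∈ W i, ∀ v ∈ W j, G.Adj u v → i = j ∨ j = i + 1 ∨ j = i - 1) ∧
    (∀ i, ∀ u ∈ W i, ∀ u' ∈ W i, u ≠ u' → pos u ≠ pos u') ∧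
    (∀ i, ∀ u ∈ W i, ∀ u' ∈ W i, ∀ v ∈ W (i + 1), pos u' ≤ pos u → G.Adj u v → G.Adj u' v) ∧
    (∀ i, ∀ v ∈ W (i + 1), ∀ v' ∈ W (i + 1), ∀ u ∈ W i, pos v' ≤ pos v → G.Adj u v → G.Adj u v')

namespace CycleBlowupAux

/-- The residue `(i - r) mod L`. -/
def DD (L i r : ℕ) : ℕ := (i + L - r % L) % L

def botAt (L i r : ℕ) : Prop := DD L i r % 2 = 1

def topAt (L i r : ℕ) : Prop := DD L i r % 2 = 0 ∧ DD L i r ≠ L - 1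

instance (L i : ℕ) : DecidablePred (botAt L i) := fun r => by unfold botAt; infer_instance
instance (L i : ℕ) : DecidablePred (topAt L i) := fun r => by unfold topAt; infer_instance

/-- number of bottom-rounds before `r`. -/
def cB (L i r : ℕ) : ℕ := ((Finset.range r).filter (botAt L i)).card
/-- number of top-rounds before `r`. -/
def cT (L i r : ℕ) : ℕ := ((Finset.range r).filter (topAt L i)).card
/-- number of rounds before `r` with residue `c`. -/
def cC (L i c r : ℕ) : ℕ := ((Finset.range r).filter (fun r' => DD L i r' = c)).card

def removedAt (L Ω i a r : ℕ) : Prop :=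
  (botAt L i r ∧ cB L i r = a) ∨ (topAt L i r ∧ cT L i r = Ω - 1 - a)

lemma count_step (p : ℕ → Prop) [DecidablePred p] (r : ℕ) :
    ((Finset.range (r+1)).filter p).card
      = ((Finset.range r).filter p).card + (if p r then 1 else 0) := by
  rw [Finset.range_add_one, Finset.filter_insert]
  by_cases h : p r
  · rw [if_pos h, if_pos h, Finset.card_insert_of_notMem (by simp)]
  · rw [if_neg h, if_neg h]
    omega

lemma reach (p : ℕ → Prop) [DecidablePred p] :
    ∀ k a, a < ((Finset.range k).filter p).card →
      ∃ r, r < k ∧ p r ∧ ((Finset.range r).filter p).card = a := by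
  intro k
  induction k with
  | zero => intro a ha; simp at ha
  | succ n ih =>
      intro a ha
      rw [count_step] at ha
      by_cases hp : p n
      · rw [if_pos hp] at ha
        rcases Nat.lt_or_ge a (((Finset.range n).filter p).card) with h | h
        · obtain ⟨r, h1, h2, h3⟩ := ih a h
          exact ⟨r, Nat.lt_succ_of_lt h1, h2, h3⟩
        · have he : ((Finset.range n).filter p).card = a := by omega
          exact ⟨n, Nat.lt_succ_self n, hp, he⟩
      · rw [if_neg hp] at ha
        obtain ⟨r, h1, h2, h3⟩ := ih a (by omega)
        exact ⟨r, Nat.lt_succ_of_lt h1, h2, h3⟩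

lemma DD_lt (L i r : ℕ) (hL : 0 < L) : DD L i r < L := Nat.mod_lt _ hL

lemma eq_of_modEq_lt {L a b : ℕ} (h : a ≡ b [MOD L]) (ha : a < L) (hb : b < L) : a = b := by
  unfold Nat.ModEq at h
  rwa [Nat.mod_eq_of_lt ha, Nat.mod_eq_of_lt hb] at h

lemma DD_pw (L i r : ℕ) (hL : 0 < L) (hi : i < L) :
    DD L i r = if r % L ≤ i then i - r % L else i + L - r % L := by
  have hx : r % L < L := Nat.mod_lt _ hL
  unfold DD
  by_cases h : r % L ≤ i
  · rw [if_pos h]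
    have h2 : i + L - r % L = L + (i - r % L) := by omega
    rw [h2, Nat.add_mod_left, Nat.mod_eq_of_lt (by omega)]
  · rw [if_neg h]
    exact Nat.mod_eq_of_lt (by omega)

lemma succ_mod (L r : ℕ) (hL : 0 < L) :
    (r+1) % L = if r % L + 1 = L then 0 else r % L + 1 := by
  have hx : r % L < L := Nat.mod_lt _ hL
  have h0 : r + 1 = (r % L + 1) + L * (r / L) := by
    have := Nat.mod_add_div r L
    omega
  rw [h0, Nat.add_mul_mod_self_left]
  by_cases h : r % L + 1 = L
  · rw [if_pos h, h, Nat.mod_self]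
  · rw [if_neg h, Nat.mod_eq_of_lt (by omega)]

lemma DD_succ_i (L i r : ℕ) (hL : 0 < L) (hi : i < L) :
    DD L ((i+1) % L) r = (DD L i r + 1) % L := by
  have hx : r % L < L := Nat.mod_lt _ hL
  have hd : DD L i r < L := DD_lt L i r hL
  -- both sides are < L and congruent to (i+1) + (L - r % L) mod L
  have e1 : DD L ((i+1) % L) r = ((i+1) % L + (L - r % L)) % L := by
    unfold DD
    congr 1
    omega
  have m1 : ((i+1) % L + (L - r % L)) % L = ((i+1) + (L - r % L)) % L :=
    (Nat.mod_modEq (i+1) L).add_right _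
  have e2 : DD L i r = (i + (L - r % L)) % L := by
    unfold DD
    congr 1
    omega
  have m2 : ((i + (L - r % L)) % L + 1) % L = ((i + (L - r % L)) + 1) % L :=
    (Nat.mod_modEq (i + (L - r % L)) L).add_right 1
  rw [e1, m1, e2, m2]
  congr 1
  omega

lemma DD_step (L i r : ℕ) (hL : 0 < L) (hi : i < L) :
    DD L i (r+1) = if DD L i r = 0 then L - 1 else DD L i r - 1 := by
  have hx : r % L < L := Nat.mod_lt _ hL
  rw [DD_pw L i (r+1) hL hi, DD_pw L i r hL hi, succ_mod L r hL]
  split_ifs <;> omega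

lemma pt1 (L i r : ℕ) (hL5 : 5 ≤ L) (hL2 : L % 2 = 1) (hi : i < L) :
    botAt L ((i+1)%L) r ↔ topAt L i r := by
  have hL : 0 < L := by omega
  have hd : DD L i r < L := DD_lt L i r hL
  unfold botAt topAt
  rw [DD_succ_i L i r hL hi]
  by_cases h : DD L i r = L - 1
  · rw [h, show L - 1 + 1 = L by omega, Nat.mod_self]
    omega
  · rw [Nat.mod_eq_of_lt (show DD L i r + 1 < L by omega)]
    omega

lemma pt2 (L i r : ℕ) (hL5 : 5 ≤ L) (hL2 : L % 2 = 1) (hi : i < L) :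
    topAt L ((i+1)%L) r ↔ ((botAt L i r ∧ DD L i r ≠ L - 2) ∨ DD L i r = L - 1) := by
  have hL : 0 < L := by omega
  have hd : DD L i r < L := DD_lt L i r hL
  unfold botAt topAt
  rw [DD_succ_i L i r hL hi]
  by_cases h : DD L i r = L - 1
  · rw [h, show L - 1 + 1 = L by omega, Nat.mod_self]
    omega
  · rw [Nat.mod_eq_of_lt (show DD L i r + 1 < L by omega)]
    omega

lemma cB_succ (L i r : ℕ) (hL5 : 5 ≤ L) (hL2 : L % 2 = 1) (hi : i < L) :
    cB L ((i+1)%L) r = cT L i r := by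
  unfold cB cT
  congr 1
  apply Finset.filter_congr
  intro x _
  exact pt1 L i x hL5 hL2 hi

lemma key2 (L i : ℕ) (hL5 : 5 ≤ L) (hL2 : L % 2 = 1) (hi : i < L) :
    ∀ r, cT L ((i+1)%L) r + cC L i (L-2) r = cB L i r + cC L i (L-1) r := by
  intro r
  induction r with
  | zero => simp [cT, cB, cC]
  | succ n ih =>
      unfold cT cB cC at ih ⊢
      rw [count_step, count_step, count_step, count_step]
      have h2 := pt2 L i n hL5 hL2 hi
      have hd := DD_lt L i n (by omega)
      simp only [h2]
      unfold botAt at *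
      grind

lemma key3 (L i : ℕ) (hL5 : 5 ≤ L) (hL2 : L % 2 = 1) (hi : i < L) :
    ∀ r, cC L i (L-1) r ≤ cC L i (L-2) r + (if DD L i r = L-2 then 1 else 0) := by
  intro r
  induction r with
  | zero => simp [cC]
  | succ n ih =>
      unfold cC at ih ⊢
      rw [count_step, count_step, DD_step L i n (by omega) hi]
      have hd := DD_lt L i n (by omega)
      split_ifs at ih ⊢ <;> omega

lemma partition (L i : ℕ) (hL5 : 5 ≤ L) (hL2 : L % 2 = 1) (hi : i < L) :
    ∀ r, cB L i r + cT L i r + cC L i (L-1) r = r := by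
  intro r
  induction r with
  | zero => simp [cB, cT, cC]
  | succ n ih =>
      unfold cB cT cC at ih ⊢
      rw [count_step, count_step, count_step]
      have hd := DD_lt L i n (by omega)
      unfold botAt topAt at *
      grind

lemma DD_eq_iff (L i r' : ℕ) (hL : 0 < L) (hi : i < L) :
    DD L i r' = L - 1 ↔ r' % L = (i+1) % L := by
  have hx : r' % L < L := Nat.mod_lt _ hL
  rw [DD_pw L i r' hL hi]
  rcases Nat.lt_or_ge (i+1) L with h | h
  · rw [Nat.mod_eq_of_lt h]
    split_ifs <;> omega
  · have h2 : (i+1) % L = 0 := by rw [show i+1 = L by omega, Nat.mod_self]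
    rw [h2]
    split_ifs <;> omega

lemma cC_le (L i K : ℕ) (hL : 0 < L) (hi : i < L) (hK : 1 ≤ K) :
    cC L i (L-1) K ≤ (K-1)/L + 1 := by
  unfold cC
  have hle : ((Finset.range K).filter (fun r' => DD L i r' = L-1)).card
      ≤ (Finset.range ((K-1)/L + 1)).card := by
    apply Finset.card_le_card_of_injOn (fun r' => r' / L)
    · intro x hx
      simp only [Finset.mem_coe, Finset.mem_filter, Finset.mem_range] at hx ⊢
      have : x / L ≤ (K-1)/L := Nat.div_le_div_right (by omega)
      omega
    · intro x hx y hy hxy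
      simp only [Finset.coe_filter, Set.mem_setOf_eq, Finset.mem_range] at hx hy
      have hx2 := (DD_eq_iff L i x hL hi).mp hx.2
      have hy2 := (DD_eq_iff L i y hL hi).mp hy.2
      calc x = L * (x / L) + x % L := (Nat.div_add_mod x L).symm
        _ = L * (y / L) + y % L := by
              rw [show x / L = y / L from hxy, hx2, hy2]
        _ = y := Nat.div_add_mod y L
  rwa [Finset.card_range] at hle

lemma cBT_ge (L Ω K i : ℕ) (hL5 : 5 ≤ L) (hL2 : L % 2 = 1) (hΩ : 1 ≤ Ω)
    (hK : L * Ω ≤ (L-1) * K) (hi : i < L) :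
    Ω ≤ cB L i K + cT L i K := by
  have hL : 0 < L := by omega
  have e1 : (L-1) * K + K = L * K := by
    have h : L - 1 + 1 = L := by omega
    calc (L-1) * K + K = ((L-1) + 1) * K := by ring
      _ = L * K := by rw [h]
  have hΩp : 0 < L * Ω := Nat.mul_pos hL hΩ
  have hKpos : 0 < K := by
    rcases Nat.eq_zero_or_pos K with h | h
    · subst h; rw [Nat.mul_zero] at hK; omega
    · exact h
  have hKΩ : Ω < K := by
    by_contra hcon
    push_neg at hcon
    have h1 : L * K ≤ L * Ω := Nat.mul_le_mul_left _ hcon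
    omega
  have e2 : L * (K - Ω) + L * Ω = L * K := by
    rw [← Nat.mul_add]
    congr 1
    omega
  have hs : K ≤ L * (K - Ω) := by omega
  have hcc : cC L i (L-1) K ≤ K - Ω := by
    have h1 := cC_le L i K hL hi (by omega)
    have h2 : (K-1)/L < K - Ω := by
      rw [Nat.div_lt_iff_lt_mul hL]
      calc K - 1 < K := by omega
        _ ≤ L * (K - Ω) := hs
        _ = (K - Ω) * L := by ring
    omega
  have hp := partition L i hL5 hL2 hi K
  omega

lemma exists_removedAt (L Ω K i a : ℕ) (hL5 : 5 ≤ L) (hL2 : L % 2 = 1) (hΩ : 1 ≤ Ω)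
    (hK : L * Ω ≤ (L-1) * K) (hi : i < L) (ha : a < Ω) :
    ∃ r, r < K ∧ removedAt L Ω i a r := by
  have h := cBT_ge L Ω K i hL5 hL2 hΩ hK hi
  by_cases hc : a < cB L i K
  · unfold cB at hc
    obtain ⟨r, h1, h2, h3⟩ := reach (botAt L i) K a hc
    exact ⟨r, h1, Or.inl ⟨h2, h3⟩⟩
  · have hc2 : Ω - 1 - a < cT L i K := by omega
    unfold cT at hc2
    obtain ⟨r, h1, h2, h3⟩ := reach (topAt L i) K _ hc2
    exact ⟨r, h1, Or.inr ⟨h2, h3⟩⟩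

lemma not_cross (L Ω i j a b r : ℕ) (hL5 : 5 ≤ L) (hL2 : L % 2 = 1) (hi : i < L)
    (hj : j = (i+1) % L) (ha : a < Ω) (hb : b < Ω) (hab : a + b + 2 ≤ Ω)
    (h1 : removedAt L Ω i a r) (h2 : removedAt L Ω j b r) : False := by
  subst hj
  have hL : 0 < L := by omega
  have hd := DD_lt L i r hL
  have hp1 := pt1 L i r hL5 hL2 hi
  have hp2 := pt2 L i r hL5 hL2 hi
  rcases h1 with ⟨hb1, he1⟩ | ⟨ht1, he1⟩ <;> rcases h2 with ⟨hb2, he2⟩ | ⟨ht2, he2⟩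
  · have hx := hp1.mp hb2
    unfold botAt at hb1
    unfold topAt at hx
    omega
  · have h3 := hp2.mp ht2
    have hne : DD L i r ≠ L - 2 := by
      unfold botAt at hb1 h3
      rcases h3 with ⟨_, hn⟩ | hfl
      · exact hn
      · omega
    have k2 := key2 L i hL5 hL2 hi r
    have k3 := key3 L i hL5 hL2 hi r
    rw [if_neg hne] at k3
    omega
  · have hcb := cB_succ L i r hL5 hL2 hi
    omega
  · have h3 := hp2.mp ht2
    unfold topAt at ht1
    rcases h3 with ⟨hb3, _⟩ | h3
    · unfold botAt at hb3; omega
    · omega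

lemma same_inj (L Ω i a a' r : ℕ) (ha : a < Ω) (ha' : a' < Ω)
    (h1 : removedAt L Ω i a r) (h2 : removedAt L Ω i a' r) : a = a' := by
  rcases h1 with ⟨hb1, he1⟩ | ⟨ht1, he1⟩ <;> rcases h2 with ⟨hb2, he2⟩ | ⟨ht2, he2⟩
  · omega
  · unfold botAt at hb1; unfold topAt at ht2; omega
  · unfold botAt at hb2; unfold topAt at ht1; omega
  · omega

end CycleBlowupAux

open CycleBlowupAux in
/-- Every blow-up of a cycle of odd length `ℓ ≥ 5` satisfies
`χ(G) ≤ ⌈(ℓ/(ℓ-1))·ω(G)⌉`. -/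
theorem cycleBlowup_colorable {V : Type} [Fintype V] [DecidableEq V]
    (ℓ : ℕ) (hodd : Odd ℓ) (hℓ : 5 ≤ ℓ) (G : SimpleGraph V)
    (hG : IsCycleBlowup G ℓ) :
    G.Colorable ((ℓ * G.cliqueNum) ⌈/⌉ (ℓ - 1)) := by
  classical
  obtain ⟨W, pos, huniq, hnon, hclq, hadjp, hposinj, hord1, hord2⟩ := hG
  haveI : NeZero ℓ := ⟨by omega⟩
  haveI : Fact (1 < ℓ) := ⟨by omega⟩
  have hodd' : ℓ % 2 = 1 := Nat.odd_iff.mp hodd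
  set Ω := G.cliqueNum with hΩdef
  set K := (ℓ * Ω) ⌈/⌉ (ℓ - 1) with hKdef
  have hKprop : ℓ * Ω ≤ (ℓ - 1) * K := by
    have h := le_smul_ceilDiv (a := ℓ - 1) (b := ℓ * Ω) (by omega)
    simpa [smul_eq_mul] using h
  cases isEmpty_or_nonempty V with
  | inl hemp =>
      exact ⟨SimpleGraph.Coloring.mk (fun v => isEmptyElim v) (fun {v w} h => isEmptyElim v)⟩
  | inr hnv =>
  -- clique number is at least 1
  have hΩ1 : 1 ≤ Ω := by
    obtain ⟨v⟩ := hnv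
    have h1 : G.IsClique (({v} : Finset V) : Set V) := by
      rw [Finset.coe_singleton]
      exact Set.pairwise_singleton _ _
    have h2 : ({v} : Finset V).card ≤ G.cliqueNum :=
      SimpleGraph.IsClique.card_le_cliqueNum (tc := h1)
    simpa using h2
  -- part function
  have hPex : ∀ v : V, ∃ i, v ∈ W i := fun v => (huniq v).exists
  let P : V → ZMod ℓ := fun v => (hPex v).choose
  have hPmem : ∀ v, v ∈ W (P v) := fun v => (hPex v).choose_spec
  have hPeq : ∀ v i, v ∈ W i → P v = i := by
    intro v i hv
    exact ((huniq v).unique (hPmem v) hv)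
  -- rank function
  let rk : V → ℕ := fun v => ((W (P v)).filter (fun u => pos u < pos v)).card
  have hWΩ : ∀ i, (W i).card ≤ Ω := fun i =>
    SimpleGraph.IsClique.card_le_cliqueNum (tc := hclq i)
  have hrk_lt : ∀ v, rk v < Ω := by
    intro v
    have h1 : (W (P v)).filter (fun u => pos u < pos v) ⊂ W (P v) := by
      rw [Finset.filter_ssubset]
      exact ⟨v, hPmem v, by simp⟩
    exact lt_of_lt_of_le (Finset.card_lt_card h1) (hWΩ _)
  have hrk_mono : ∀ u v, P u = P v → pos u < pos v → rk u < rk v := by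
    intro u v hP hlt
    apply Finset.card_lt_card
    rw [hP]
    constructor
    · intro x hx
      rw [Finset.mem_filter] at hx ⊢
      exact ⟨hx.1, lt_trans hx.2 hlt⟩
    · intro hsub
      have hu : u ∈ (W (P v)).filter (fun x => pos x < pos v) :=
        Finset.mem_filter.2 ⟨hP ▸ hPmem u, hlt⟩
      have := Finset.mem_filter.1 (hsub hu)
      omega
  have hrk_inj : ∀ u v, P u = P v → u ≠ v → rk u ≠ rk v := by
    intro u v hP hne
    have hpos : pos u ≠ pos v := by
      apply hposinj (P u) u (hPmem u) v _ hne
      rw [hP]; exact hPmem v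
    rcases Nat.lt_or_ge (pos u) (pos v) with h | h
    · exact Nat.ne_of_lt (hrk_mono u v hP h)
    · have h2 : pos v < pos u := by omega
      exact (Nat.ne_of_lt (hrk_mono v u hP.symm h2)).symm
  -- cross-edge clique bound
  have hcross : ∀ u v, G.Adj u v → P v = P u + 1 → rk u + rk v + 2 ≤ Ω := by
    intro u v hadj hPv
    have hvB : v ∈ W (P u + 1) := by rw [← hPv]; exact hPmem v
    set A := (W (P u)).filter (fun x => pos x ≤ pos u) with hA
    set B := (W (P u + 1)).filter (fun y => pos y ≤ pos v) with hB
    have hclique : G.IsClique ((A ∪ B : Finset V) : Set V) := by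
      intro x hx y hy hxy
      rw [Finset.coe_union, Set.mem_union] at hx hy
      have hx' : (x ∈ W (P u) ∧ pos x ≤ pos u) ∨ (x ∈ W (P u + 1) ∧ pos x ≤ pos v) := by
        rcases hx with hx | hx
        · exact Or.inl (Finset.mem_filter.1 hx)
        · exact Or.inr (Finset.mem_filter.1 hx)
      have hy' : (y ∈ W (P u) ∧ pos y ≤ pos u) ∨ (y ∈ W (P u + 1) ∧ pos y ≤ pos v) := by
        rcases hy with hy | hy
        · exact Or.inl (Finset.mem_filter.1 hy)
        · exact Or.inr (Finset.mem_filter.1 hy)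
      rcases hx' with ⟨hxW, hxp⟩ | ⟨hxW, hxp⟩ <;> rcases hy' with ⟨hyW, hyp⟩ | ⟨hyW, hyp⟩
      · exact hclq (P u) hxW hyW hxy
      · have h1 : G.Adj x v := hord1 (P u) u (hPmem u) x hxW v hvB hxp hadj
        exact hord2 (P u) v hvB y hyW x hxW hyp h1
      · have h1 : G.Adj y v := hord1 (P u) u (hPmem u) y hyW v hvB hyp hadj
        exact (hord2 (P u) v hvB x hxW y hyW hxp h1).symm
      · exact hclq (P u + 1) hxW hyW hxy
    have hdisj : Disjoint A B := by
      rw [Finset.disjoint_left]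
      intro x hxA hxB
      have h1 : P x = P u := hPeq x (P u) (Finset.mem_filter.1 hxA).1
      have h2 : P x = P u + 1 := hPeq x (P u + 1) (Finset.mem_filter.1 hxB).1
      have h3 : (P u : ZMod ℓ) = P u + 1 := h1.symm.trans h2
      have h4 : (0 : ZMod ℓ) = 1 := by
        have := congrArg (fun z => z - P u) h3
        simpa using this
      have h5 := congrArg ZMod.val h4
      rw [ZMod.val_zero, ZMod.val_one] at h5
      exact absurd h5 (by omega)
    have hcard : A.card + B.card ≤ Ω := by
      have h1 : G.IsClique ((A ∪ B : Finset V) : Set V) := hclique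
      have h2 : (A ∪ B).card ≤ Ω := SimpleGraph.IsClique.card_le_cliqueNum (tc := h1)
      rwa [Finset.card_union_of_disjoint hdisj] at h2
    have hAcard : rk u + 1 ≤ A.card := by
      have hins : insert u ((W (P u)).filter (fun x => pos x < pos u)) ⊆ A := by
        intro x hx
        rcases Finset.mem_insert.1 hx with h | hx
        · rw [h]
          exact Finset.mem_filter.2 ⟨hPmem u, le_refl _⟩
        · have h := Finset.mem_filter.1 hx
          exact Finset.mem_filter.2 ⟨h.1, le_of_lt h.2⟩
      have h2 := Finset.card_le_card hins
      rwa [Finset.card_insert_of_notMem (by simp)] at h2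
    have hBcard : rk v + 1 ≤ B.card := by
      have hins : insert v ((W (P v)).filter (fun x => pos x < pos v)) ⊆ B := by
        intro x hx
        rcases Finset.mem_insert.1 hx with h | hx
        · rw [h]
          exact Finset.mem_filter.2 ⟨hvB, le_refl _⟩
        · have h := Finset.mem_filter.1 hx
          refine Finset.mem_filter.2 ⟨?_, le_of_lt h.2⟩
          rw [← hPv]
          exact h.1
      have h2 := Finset.card_le_card hins
      rwa [Finset.card_insert_of_notMem (by simp)] at h2
    omega
  -- the coloring
  have hval : ∀ v : V, (P v).val < ℓ := fun v => ZMod.val_lt _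
  have hexist : ∀ v : V, ∃ r, r < K ∧ removedAt ℓ Ω (P v).val (rk v) r := by
    intro v
    exact exists_removedAt ℓ Ω K (P v).val (rk v) hℓ hodd' hΩ1 hKprop (hval v) (hrk_lt v)
  refine ⟨SimpleGraph.Coloring.mk
    (fun v => (⟨(hexist v).choose, (hexist v).choose_spec.1⟩ : Fin K)) ?_⟩
  intro u v hadj heq
  have hru : removedAt ℓ Ω (P u).val (rk u) ((hexist u).choose) := (hexist u).choose_spec.2
  have hrv : removedAt ℓ Ω (P v).val (rk v) ((hexist v).choose) := (hexist v).choose_spec.2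
  have hsame : (hexist u).choose = (hexist v).choose := by
    have := congrArg Fin.val heq
    simpa using this
  rw [hsame] at hru
  rcases hadjp (P u) (P v) u (hPmem u) v (hPmem v) hadj with hc | hc | hc
  · -- same part
    have hval_eq : (P u).val = (P v).val := by rw [hc]
    rw [hval_eq] at hru
    have : rk u = rk v :=
      same_inj ℓ Ω (P v).val (rk u) (rk v) ((hexist v).choose)
        (hrk_lt u) (hrk_lt v) hru hrv
    exact hrk_inj u v hc (G.ne_of_adj hadj) this
  · -- P v = P u + 1
    have hvv : (P v).val = ((P u).val + 1) % ℓ := by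
      rw [hc, ZMod.val_add, ZMod.val_one]
    exact not_cross ℓ Ω (P u).val (P v).val (rk u) (rk v) ((hexist v).choose)
      hℓ hodd' (hval u) hvv (hrk_lt u) (hrk_lt v) (hcross u v hadj hc) hru hrv
  · -- P v = P u - 1, so P u = P v + 1
    have hc' : P u = P v + 1 := by rw [hc]; ring
    have hvv : (P u).val = ((P v).val + 1) % ℓ := by
      rw [hc', ZMod.val_add, ZMod.val_one]
    have hcr := hcross v u hadj.symm hc'
    exact not_cross ℓ Ω (P v).val (P u).val (rk v) (rk u) ((hexist v).choose)
      hℓ hodd' (hval v) hvv (hrk_lt v) (hrk_lt u) (by omega) hrv hru
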